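/- Let H ⊆ Y^X be a multiclass hypothesis class with finite label set Y, and let ℓ∘H = {(x,y) ↦ 1[h(x) ≠ y] : h ∈ H} be its loss class. For any finite sequence x₁,…,xₙ ∈ X with empirical measure μ̂ₙ, and any ε > 0: N(ε, H, d_{μ̂ₙ}) ≤ sup_{μ̃ ∈ Π(X×Y)} N(2ε/|Y|, ℓ∘H, d_{μ̃}), where d_{μ̂ₙ}(h,h') = (1/n)∑ᵢ 1[h(xᵢ)≠h'(xᵢ)] and d_{μ̃}(f,g) = P_{(x,y)∼μ̃}[f(x,y) ≠ g(x,y)]. -/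

import Mathlib

open MeasureTheory ENNReal

noncomputable def coverNum {G : Type*} (d : G → G → ℝ) (ε : ℝ) (A : Set G) : ℕ∞ :=
  sInf {n : ℕ∞ | ∃ C : Set G, C ⊆ A ∧ (∀ g ∈ A, ∃ g' ∈ C, d g g' ≤ ε) ∧ C.encard = n}

/-- The empirical (normalized Hamming) metric induced by the sample `x : Fin n → X`. -/
noncomputable def empDistSeq {X Y : Type*} [DecidableEq Y] {n : ℕ} (x : Fin n → X)
    (f g : X → Y) : ℝ :=
  (∑ t, if f (x t) ≠ g (x t) then (1 : ℝ) else 0) / n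

/-- Multiclass Haussler-type bound: for a finite label set `Y`, the empirical covering
number of `H` at scale `ε` is at most the worst-case covering number of its loss
class `ℓ∘H` at scale `2ε/|Y|` over all joint distributions on `X × Y`. -/
theorem coverNum_le_lossClass_coverNum {X Y : Type*} [MeasurableSpace X]
    [MeasurableSpace Y] [Fintype Y] [Nonempty Y] [DecidableEq Y] {n : ℕ} (hn : 0 < n)
    (x : Fin n → X) (H : Set (X → Y)) {ε : ℝ} (hε : 0 < ε) :
    coverNum (empDistSeq x) ε H ≤
      ⨆ (μt : Measure (X × Y)) (_ : IsProbabilityMeasure μt),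
        coverNum (fun f g => (μt {p | f p ≠ g p}).toReal) (2 * ε / Fintype.card Y)
          {g : X × Y → ℝ | ∃ h ∈ H, g = fun p => if h p.1 ≠ p.2 then (1 : ℝ) else 0} := by
  classical
  set Yc : ℕ := Fintype.card Y with hYc
  have hYc0 : 0 < Yc := Fintype.card_pos
  set μt : Measure (X × Y) :=
    ((n : ℝ≥0∞) * Yc)⁻¹ • ∑ i : Fin n, ∑ y : Y, Measure.dirac ((x i, y) : X × Y) with hμt
  have hne : ((n : ℝ≥0∞) * Yc) ≠ 0 :=
    mul_ne_zero (Nat.cast_ne_zero.mpr hn.ne') (Nat.cast_ne_zero.mpr Fintype.card_pos.ne')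
  have hnt : ((n : ℝ≥0∞) * Yc) ≠ ⊤ := by
    simp [ENNReal.mul_ne_top]
  have happly : ∀ S : Set (X × Y),
      μt S = ((n : ℝ≥0∞) * Yc)⁻¹ * ∑ i : Fin n, ∑ y : Y, Measure.dirac ((x i, y) : X × Y) S := by
    intro S
    rw [hμt]
    rw [Measure.smul_apply, Measure.finset_sum_apply]
    simp only [Measure.finset_sum_apply, smul_eq_mul]
  have hprob : IsProbabilityMeasure μt := by
    constructor
    rw [happly]
    simp only [measure_univ]
    rw [Finset.sum_const, Finset.sum_const]
    simp only [Finset.card_univ, Fintype.card_fin, nsmul_eq_mul, mul_one]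
    rw [← hYc, mul_comm ((n:ℝ≥0∞) * Yc)⁻¹]
    · rw [mul_comm (n : ℝ≥0∞)]
      exact ENNReal.mul_inv_cancel (by rwa [mul_comm] at hne) (by rwa [mul_comm] at hnt)
  refine le_iSup₂_of_le μt hprob ?_
  -- key lemma
  have key : ∀ h h' : X → Y, h ∈ H → h' ∈ H →
      (μt {p : X × Y | (if h p.1 ≠ p.2 then (1:ℝ) else 0) ≠ (if h' p.1 ≠ p.2 then (1:ℝ) else 0)}).toReal
        ≤ 2 * ε / Yc → empDistSeq x h h' ≤ ε := by
    intro h h' _ _ hd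
    set S : Set (X × Y) :=
      {p : X × Y | (if h p.1 ≠ p.2 then (1:ℝ) else 0) ≠ (if h' p.1 ≠ p.2 then (1:ℝ) else 0)} with hS
    set k : ℕ := (Finset.univ.filter fun i : Fin n => h (x i) ≠ h' (x i)).card with hk
    have hmemS : ∀ i : Fin n, h (x i) ≠ h' (x i) →
        ((x i, h (x i)) ∈ S ∧ (x i, h' (x i)) ∈ S) := by
      intro i hi
      refine ⟨?_, ?_⟩
      · show (if h (x i) ≠ h (x i) then (1:ℝ) else 0) ≠ (if h' (x i) ≠ h (x i) then (1:ℝ) else 0)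
        simp [Ne.symm hi]
      · show (if h (x i) ≠ h' (x i) then (1:ℝ) else 0) ≠ (if h' (x i) ≠ h' (x i) then (1:ℝ) else 0)
        simp [hi]
    have hsum : (2 * k : ℝ≥0∞) ≤ ∑ i : Fin n, ∑ y : Y, Measure.dirac ((x i, y) : X × Y) S := by
      have h1 : ∑ i : Fin n, (if h (x i) ≠ h' (x i) then (2:ℝ≥0∞) else 0) = 2 * k := by
        rw [Finset.sum_ite, Finset.sum_const, Finset.sum_const]
        simp [hk, mul_comm]
      rw [← h1]
      refine Finset.sum_le_sum fun i _ => ?_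
      by_cases hi : h (x i) ≠ h' (x i)
      · rw [if_pos hi]
        obtain ⟨hm1, hm2⟩ := hmemS i hi
        calc (2 : ℝ≥0∞) = ∑ y ∈ ({h (x i), h' (x i)} : Finset Y),
              Measure.dirac ((x i, y) : X × Y) S := by
              rw [Finset.sum_pair hi]
              rw [Measure.dirac_apply_of_mem hm1, Measure.dirac_apply_of_mem hm2]; norm_num
          _ ≤ _ := Finset.sum_le_sum_of_subset (Finset.subset_univ _)
      · rw [not_not] at hi
        simp [hi]
    have hμS : ((n : ℝ≥0∞) * Yc)⁻¹ * (2 * k) ≤ μt S := by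
      rw [happly]
      exact mul_le_mul_right hsum _
    have hfin : μt S ≠ ⊤ := measure_ne_top _ _
    have htr := ENNReal.toReal_mono hfin hμS
    have hcalc : (((n : ℝ≥0∞) * Yc)⁻¹ * (2 * k)).toReal = ((n : ℝ) * Yc)⁻¹ * (2 * k) := by
      rw [ENNReal.toReal_mul, ENNReal.toReal_inv, ENNReal.toReal_mul, ENNReal.toReal_mul]
      simp
    rw [hcalc] at htr
    have hle : ((n : ℝ) * Yc)⁻¹ * (2 * k) ≤ 2 * ε / Yc := le_trans htr hd
    have hempd : empDistSeq x h h' = k / n := by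
      unfold empDistSeq
      congr 1
      rw [hk]
      rw [Finset.sum_ite, Finset.sum_const, Finset.sum_const]
      simp
    rw [hempd]
    have hn' : (0:ℝ) < n := by exact_mod_cast hn
    have hY' : (0:ℝ) < Yc := by exact_mod_cast hYc0
    rw [div_le_iff₀ hn']
    have := (mul_le_mul_iff_of_pos_right (by positivity : (0:ℝ) < Yc * n / 2)).mpr hle
    calc (k : ℝ) = ((n : ℝ) * Yc)⁻¹ * (2 * k) * (Yc * n / 2) := by field_simp
      _ ≤ 2 * ε / Yc * (Yc * n / 2) := this
      _ = ε * n := by field_simp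
  -- main cover argument
  apply le_sInf
  rintro m ⟨C, hCsub, hCcov, hCcard⟩
  have hY : Nonempty (X → Y) := ⟨fun _ => Classical.arbitrary Y⟩
  set r : (X × Y → ℝ) → (X → Y) := fun g =>
    if hg : g ∈ C then (hCsub hg).choose else Classical.arbitrary (X → Y) with hr
  have hrH : ∀ g ∈ C, r g ∈ H := by
    intro g hg; rw [hr]; simp only [hg, dif_pos]
    exact (hCsub hg).choose_spec.1
  have hrEq : ∀ g ∈ C, g = fun p : X × Y => if r g p.1 ≠ p.2 then (1:ℝ) else 0 := by
    intro g hg; rw [hr]; simp only [hg, dif_pos]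
    exact (hCsub hg).choose_spec.2
  set C' : Set (X → Y) := r '' C with hC'
  have hmem : C'.encard ∈ {m : ℕ∞ | ∃ C : Set (X → Y), C ⊆ H ∧
      (∀ g ∈ H, ∃ g' ∈ C, empDistSeq x g g' ≤ ε) ∧ C.encard = m} := by
    refine ⟨C', ?_, ?_, rfl⟩
    · rintro h' ⟨g, hg, rfl⟩; exact hrH g hg
    · intro h hh
      obtain ⟨g', hg'C, hg'd⟩ := hCcov (fun p => if h p.1 ≠ p.2 then (1:ℝ) else 0) ⟨h, hh, rfl⟩
      refine ⟨r g', ⟨g', hg'C, rfl⟩, ?_⟩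
      apply key h (r g') hh (hrH g' hg'C)
      have e := hrEq g' hg'C
      rw [e] at hg'd
      exact hg'd
  calc coverNum (empDistSeq x) ε H ≤ C'.encard := sInf_le hmem
    _ ≤ C.encard := Set.encard_image_le _ _
    _ = m := hCcard
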